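/- arXiv:1806.05317 — 5 statements merged into one kernel-verified Lean document; each statement's English description precedes it below -/
import Mathlib

section
/- Let J be a nonnegative random variable whose Laplace transform is L(t) = exp(-t^α) for some α ∈ (0,1) (i.e. J is α-stable positive), and let Y₁, …, Yₙ be i.i.d. 1-Fréchet random variables with scale parameters σ₁, …, σₙ > 0, independent of J. Then the vector (J Y₁, …, J Yₙ) satisfies P(J Yₖ ≤ xₖ, k=1,…,n) = exp(-(Σₖ σₖ/xₖ)^α) for all xₖ > 0; this is the multivariate α-logistic distribution. -/
open MeasureTheory ProbabilityTheory

/-- `Y` is a 1-Fréchet random variable with scale parameter `σ`. -/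
def IsFrechet {Ω : Type*} [MeasurableSpace Ω] (μ : Measure Ω) (Y : Ω → ℝ) (σ : ℝ) : Prop :=
  (∀ x : ℝ, 0 < x → μ {ω | Y ω ≤ x} = ENNReal.ofReal (Real.exp (-σ / x))) ∧
  (∀ x : ℝ, x ≤ 0 → μ {ω | Y ω ≤ x} = 0)

theorem stmt6 {Ω : Type*} [MeasurableSpace Ω] (μ : Measure Ω) [IsProbabilityMeasure μ]
    (n : ℕ) (α : ℝ) (hα : α ∈ Set.Ioo (0 : ℝ) 1)
    (J : Ω → ℝ) (hJmeas : Measurable J) (hJnn : ∀ ω, 0 ≤ J ω)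
    -- `J` is positive `α`-stable: its Laplace transform is `exp (-t^α)`
    (hJstable : ∀ t : ℝ, 0 ≤ t → ∫ ω, Real.exp (-t * J ω) ∂μ = Real.exp (-t ^ α))
    (Y : Fin n → Ω → ℝ) (hYmeas : ∀ k, Measurable (Y k))
    (σ : Fin n → ℝ) (hσ : ∀ k, 0 < σ k) (hY : ∀ k, IsFrechet μ (Y k) (σ k))
    (hindep : iIndepFun
      (fun i : Option (Fin n) => i.elim J Y) μ) :
    ∀ x : Fin n → ℝ, (∀ k, 0 < x k) →
      μ {ω | ∀ k, J ω * Y k ω ≤ x k}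
        = ENNReal.ofReal (Real.exp (-(∑ k, σ k / x k) ^ α)) := by
  intro x hx
  set s : ℝ := ∑ k, σ k / x k with hs_def
  have hs : 0 ≤ s := Finset.sum_nonneg fun k _ => (div_pos (hσ k) (hx k)).le
  set V : Ω → (Fin n → ℝ) := fun ω k => Y k ω with hV_def
  have hVmeas : Measurable V := measurable_pi_lambda _ fun k => hYmeas k
  have hfmeas : ∀ i : Option (Fin n), Measurable ((fun i : Option (Fin n) => i.elim J Y) i) := by
    rintro (_ | k)
    · exact hJmeas
    · exact hYmeas k
  -- Step 1: J is independent of the vector V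
  have hJV : IndepFun J V μ := by
    have h1 := hindep.indepFun_finset {none} (Finset.univ.map ⟨some, Option.some_injective _⟩)
      (by simp) hfmeas
    have hφ : Measurable fun w : (({none} : Finset (Option (Fin n))) → ℝ) =>
        w ⟨none, by simp⟩ := measurable_pi_apply _
    have hψ : Measurable fun w : ((Finset.univ.map ⟨some, Option.some_injective (Fin n)⟩ :
          Finset (Option (Fin n))) → ℝ) => (fun k : Fin n => w ⟨some k, by simp⟩) :=
      measurable_pi_lambda _ fun k => measurable_pi_apply _
    exact h1.comp hφ hψ
  -- Step 2: express the probability via the product measure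
  have hBmeas : MeasurableSet {p : ℝ × (Fin n → ℝ) | ∀ k, p.1 * p.2 k ≤ x k} := by
    have : {p : ℝ × (Fin n → ℝ) | ∀ k, p.1 * p.2 k ≤ x k}
        = ⋂ k, {p : ℝ × (Fin n → ℝ) | p.1 * p.2 k ≤ x k} := by
      ext p; simp
    rw [this]
    exact MeasurableSet.iInter fun k =>
      measurableSet_le (measurable_fst.mul ((measurable_pi_apply k).comp measurable_snd))
        measurable_const
  have hmap : μ.map (fun ω => (J ω, V ω)) = (μ.map J).prod (μ.map V) :=
    (indepFun_iff_map_prod_eq_prod_map_map hJmeas.aemeasurable hVmeas.aemeasurable).mp hJV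
  have key : μ {ω | ∀ k, J ω * Y k ω ≤ x k}
      = ∫⁻ j, (μ.map V) (Prod.mk j ⁻¹' {p : ℝ × (Fin n → ℝ) | ∀ k, p.1 * p.2 k ≤ x k})
          ∂(μ.map J) := by
    rw [← Measure.prod_apply hBmeas, ← hmap,
      Measure.map_apply (hJmeas.prodMk hVmeas) hBmeas]
    rfl
  rw [key]
  -- Step 3: compute the inner measure for j ≥ 0
  have hinner : ∀ j : ℝ, 0 ≤ j →
      (μ.map V) (Prod.mk j ⁻¹' {p : ℝ × (Fin n → ℝ) | ∀ k, p.1 * p.2 k ≤ x k})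
        = ENNReal.ofReal (Real.exp (-s * j)) := by
    intro j hj
    have hset : Prod.mk j ⁻¹' {p : ℝ × (Fin n → ℝ) | ∀ k, p.1 * p.2 k ≤ x k}
        = {v : Fin n → ℝ | ∀ k, j * v k ≤ x k} := rfl
    have hsetmeas : MeasurableSet {v : Fin n → ℝ | ∀ k, j * v k ≤ x k} := by
      have : {v : Fin n → ℝ | ∀ k, j * v k ≤ x k}
          = ⋂ k, {v : Fin n → ℝ | j * v k ≤ x k} := by ext v; simp
      rw [this]
      exact MeasurableSet.iInter fun k =>
        measurableSet_le (measurable_const.mul (measurable_pi_apply k)) measurable_const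
    rw [hset, Measure.map_apply hVmeas hsetmeas]
    rcases eq_or_lt_of_le hj with hj0 | hjpos
    · -- j = 0
      have : (V ⁻¹' {v : Fin n → ℝ | ∀ k, j * v k ≤ x k}) = Set.univ := by
        ext ω; simp [← hj0, (hx _).le]
      rw [this, ← hj0]
      simp
    · -- j > 0
      have hpre : (V ⁻¹' {v : Fin n → ℝ | ∀ k, j * v k ≤ x k})
          = ⋂ i : Option (Fin n),
              (Option.elim i Set.univ (fun k => {ω | Y k ω ≤ x k / j})) := by
        ext ω
        simp only [Set.mem_preimage, Set.mem_setOf_eq, Set.mem_iInter]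
        constructor
        · rintro h (_ | k)
          · simp
          · simpa [le_div_iff₀ hjpos, mul_comm] using h k
        · intro h k
          have := h (some k)
          simp only [Option.elim, Set.mem_setOf_eq] at this
          rw [mul_comm]
          exact (le_div_iff₀ hjpos).mp this
      rw [hpre, hindep.meas_iInter]
      · rw [Fintype.prod_option]
        simp only [Option.elim]
        rw [measure_univ, one_mul]
        have hterm : ∀ k, μ {ω | Y k ω ≤ x k / j}
            = ENNReal.ofReal (Real.exp (-(σ k) / (x k / j))) :=
          fun k => (hY k).1 _ (div_pos (hx k) hjpos)
        calc ∏ k, μ {ω | Y k ω ≤ x k / j}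
            = ∏ k, ENNReal.ofReal (Real.exp (-(σ k) / (x k / j))) := by
              exact Finset.prod_congr rfl fun k _ => hterm k
          _ = ENNReal.ofReal (∏ k, Real.exp (-(σ k) / (x k / j))) :=
              (ENNReal.ofReal_prod_of_nonneg fun k _ => (Real.exp_pos _).le).symm
          _ = ENNReal.ofReal (Real.exp (∑ k, -(σ k) / (x k / j))) := by
              rw [Real.exp_sum]
          _ = ENNReal.ofReal (Real.exp (-s * j)) := by
              congr 1
              congr 1
              rw [hs_def, neg_mul, Finset.sum_mul, ← Finset.sum_neg_distrib]
              refine Finset.sum_congr rfl fun k _ => ?_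
              rw [div_div_eq_mul_div]
              ring
      · rintro (_ | k)
        · exact ⟨Set.univ, MeasurableSet.univ, rfl⟩
        · exact ⟨Set.Iic (x k / j), measurableSet_Iic, rfl⟩
  -- Step 4: integrate and use the Laplace transform
  have hae : ∀ᵐ j ∂(μ.map J), j ∈ Set.Ici (0 : ℝ) :=
    (MeasureTheory.mem_ae_map_iff hJmeas.aemeasurable measurableSet_Ici).mpr
      (Filter.Eventually.of_forall hJnn)
  rw [lintegral_congr_ae (hae.mono fun j hj => hinner j hj)]
  have hintmeas : Measurable fun j : ℝ => ENNReal.ofReal (Real.exp (-s * j)) :=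
    ENNReal.measurable_ofReal.comp (Real.measurable_exp.comp (measurable_const.mul measurable_id))
  rw [lintegral_map hintmeas hJmeas]
  have hint : Integrable (fun ω => Real.exp (-s * J ω)) μ := by
    refine Integrable.mono' (integrable_const 1)
      ((Real.measurable_exp.comp (measurable_const.mul hJmeas)).aestronglyMeasurable) ?_
    refine Filter.Eventually.of_forall fun ω => ?_
    rw [Real.norm_eq_abs, abs_of_pos (Real.exp_pos _)]
    exact Real.exp_le_one_iff.mpr (by nlinarith [hJnn ω])
  rw [← ofReal_integral_eq_lintegral_ofReal hint
    (Filter.Eventually.of_forall fun ω => (Real.exp_pos _).le), hJstable s hs]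
end

section
/- For any α ∈ [0,1) and θ > -α, the PD(α,θ) probabilities sum to 1 over all partitions of [n]; i.e., Σ over partitions π of [n] with block sizes n₁,…,n_k of ((θ+α)_{k-1↑α} ∏ᵢ (1-α)_{nᵢ-1↑1}) / ((θ+1)_{n-1↑α}) = 1. -/
/-- `(x)_{m↑a} = ∏_{j=0}^{m-1} (x + j a)`, the generalized rising factorial. -/
noncomputable def risingFac (x a : ℝ) (m : ℕ) : ℝ := ∏ j ∈ Finset.range m, (x + j * a)

namespace Stmt15Aux

open Finset

lemma risingFac_succ (x a : ℝ) (m : ℕ) :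
    risingFac x a (m + 1) = risingFac x a m * (x + m * a) := by
  simp [risingFac, Finset.prod_range_succ]

variable {ι : Type*} [DecidableEq ι]

/-- The unnormalized Pitman weight of a partition. -/
noncomputable def w (α θ : ℝ) {s : Finset ι} (P : Finpartition s) : ℝ :=
  risingFac (θ + α) α (P.parts.card - 1) * ∏ B ∈ P.parts, risingFac (1 - α) 1 (B.card - 1)

variable {a : ι} {t : Finset ι}

lemma not_mem_of_part {Q : Finpartition t} (ha : a ∉ t) {B : Finset ι} (hB : B ∈ Q.parts) :
    a ∉ B := fun h => ha (Q.le hB h)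

/-- Add `a` as a new singleton block. -/
def addNew (ha : a ∉ t) (Q : Finpartition t) : Finpartition (insert a t) :=
  Q.extend (b := {a}) (by simp)
    (by simpa [Finset.disjoint_singleton_right] using ha)
    (by rw [sup_eq_union]; ext x; simp [or_comm])

lemma addNew_parts (ha : a ∉ t) (Q : Finpartition t) :
    (addNew ha Q).parts = insert {a} Q.parts := rfl

lemma singleton_not_mem (ha : a ∉ t) (Q : Finpartition t) : ({a} : Finset ι) ∉ Q.parts :=
  fun h => not_mem_of_part ha h (mem_singleton_self a)

lemma addNew_parts_card (ha : a ∉ t) (Q : Finpartition t) :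
    (addNew ha Q).parts.card = Q.parts.card + 1 := by
  rw [addNew_parts, card_insert_of_notMem (singleton_not_mem ha Q)]

/-- Add `a` to the existing block `B`. -/
def addTo (ha : a ∉ t) (Q : Finpartition t) (B : Finset ι) (hB : B ∈ Q.parts) :
    Finpartition (insert a t) where
  parts := insert (insert a B) (Q.parts.erase B)
  supIndep := by
    rw [supIndep_iff_pairwiseDisjoint, coe_insert]
    refine Set.PairwiseDisjoint.insert (Q.disjoint.subset (coe_subset.2 (erase_subset _ _)))
      fun d hd hne => ?_
    rw [mem_coe, mem_erase] at hd
    simp only [id]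
    rw [Finset.disjoint_insert_left]
    exact ⟨not_mem_of_part ha hd.2, Q.disjoint hB hd.2 (Ne.symm hd.1)⟩
  sup_parts := by
    have h1 : Q.parts = insert B (Q.parts.erase B) := (insert_erase hB).symm
    have h2 : B ∪ (Q.parts.erase B).sup id = t := by
      have h3 := Q.sup_parts
      rw [h1, sup_insert] at h3
      simpa [sup_eq_union] using h3
    rw [sup_insert]
    simp only [id, sup_eq_union]
    rw [insert_union, h2]
  bot_notMem := by
    simp only [bot_eq_empty, mem_insert, mem_erase, not_or]
    exact ⟨fun h => (insert_ne_empty a B) h.symm,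
      fun h => Q.bot_notMem h.2⟩

lemma addTo_parts (ha : a ∉ t) (Q : Finpartition t) (B : Finset ι) (hB : B ∈ Q.parts) :
    (addTo ha Q B hB).parts = insert (insert a B) (Q.parts.erase B) := rfl

lemma insert_not_mem_erase (ha : a ∉ t) (Q : Finpartition t) (B : Finset ι) :
    insert a B ∉ Q.parts.erase B := fun h =>
  not_mem_of_part ha (mem_of_mem_erase h) (mem_insert_self a B)

lemma addTo_parts_card (ha : a ∉ t) (Q : Finpartition t) (B : Finset ι) (hB : B ∈ Q.parts) :
    (addTo ha Q B hB).parts.card = Q.parts.card := by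
  rw [addTo_parts, card_insert_of_notMem (insert_not_mem_erase ha Q B),
    card_erase_add_one hB]

/-- Combined insertion map. -/
def ins (ha : a ∉ t) : (Σ Q : Finpartition t, Option {B // B ∈ Q.parts}) →
    Finpartition (insert a t)
  | ⟨Q, none⟩ => addNew ha Q
  | ⟨Q, some x⟩ => addTo ha Q x.1 x.2

lemma ins_parts_none (ha : a ∉ t) (Q : Finpartition t) :
    (ins ha ⟨Q, none⟩).parts = insert {a} Q.parts := rfl

lemma ins_parts_some (ha : a ∉ t) (Q : Finpartition t) (x : {B // B ∈ Q.parts}) :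
    (ins ha ⟨Q, some x⟩).parts = insert (insert a x.1) (Q.parts.erase x.1) := rfl

lemma ins_injective (ha : a ∉ t) : Function.Injective (ins ha) := by
  rintro ⟨Q₁, o₁⟩ ⟨Q₂, o₂⟩ h
  have hmixed : ∀ (Q Q' : Finpartition t) (B : Finset ι) (hB : B ∈ Q'.parts),
      insert ({a} : Finset ι) Q.parts ≠ insert (insert a B) (Q'.parts.erase B) := by
    intro Q Q' B hB hp
    have h1 : ({a} : Finset ι) ∈ insert (insert a B) (Q'.parts.erase B) :=
      hp ▸ mem_insert_self _ _
    rcases mem_insert.1 h1 with h2 | h2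
    · obtain ⟨x, hx⟩ := Q'.nonempty_of_mem_parts hB
      have hxa : x ∈ ({a} : Finset ι) := by
        rw [h2]; exact mem_insert_of_mem hx
      have hxeq : x = a := mem_singleton.1 hxa
      exact not_mem_of_part ha hB (hxeq ▸ hx)
    · exact singleton_not_mem ha Q' (mem_of_mem_erase h2)
  rcases o₁ with _ | ⟨B₁, hB₁⟩ <;> rcases o₂ with _ | ⟨B₂, hB₂⟩
  · -- none, none
    have hp : insert ({a} : Finset ι) Q₁.parts = insert {a} Q₂.parts := by
      have := congrArg Finpartition.parts h
      rwa [ins_parts_none, ins_parts_none] at this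
    have hQ : Q₁.parts = Q₂.parts := by
      have := congrArg (fun s => Finset.erase s ({a} : Finset ι)) hp
      simpa [erase_insert (singleton_not_mem ha Q₁),
        erase_insert (singleton_not_mem ha Q₂)] using this
    have : Q₁ = Q₂ := Finpartition.ext hQ
    subst this; rfl
  · -- none, some
    exfalso
    have hp := congrArg Finpartition.parts h
    rw [ins_parts_none, ins_parts_some] at hp
    exact hmixed _ _ _ hB₂ hp
  · -- some, none
    exfalso
    have hp := congrArg Finpartition.parts h
    rw [ins_parts_none, ins_parts_some] at hp
    exact hmixed _ _ _ hB₁ hp.symm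
  · -- some, some
    have hp : insert (insert a B₁) (Q₁.parts.erase B₁)
        = insert (insert a B₂) (Q₂.parts.erase B₂) := by
      have := congrArg Finpartition.parts h
      rwa [ins_parts_some, ins_parts_some] at this
    have h12 : insert a B₁ = insert a B₂ := by
      have h1 : insert a B₁ ∈ insert (insert a B₂) (Q₂.parts.erase B₂) :=
        hp ▸ mem_insert_self _ _
      rcases mem_insert.1 h1 with h2 | h2
      · exact h2
      · exact absurd (mem_insert_self a B₁)
          (fun hmem => not_mem_of_part ha (mem_of_mem_erase h2) hmem)
    have hBeq : B₁ = B₂ := by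
      have := congrArg (fun s => Finset.erase s a) h12
      simpa [erase_insert (not_mem_of_part ha hB₁),
        erase_insert (not_mem_of_part ha hB₂)] using this
    subst hBeq
    have hQ : Q₁.parts = Q₂.parts := by
      have he : Q₁.parts.erase B₁ = Q₂.parts.erase B₁ := by
        have := congrArg (fun s => Finset.erase s (insert a B₁)) hp
        simpa [erase_insert (insert_not_mem_erase ha Q₁ B₁),
          erase_insert (insert_not_mem_erase ha Q₂ B₁)] using this
      rw [← insert_erase hB₁, ← insert_erase hB₂, he]
    have : Q₁ = Q₂ := Finpartition.ext hQ
    subst this; rfl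

lemma ins_surjective (ha : a ∉ t) : Function.Surjective (ins ha) := by
  intro P
  have haU : a ∈ insert a t := mem_insert_self a t
  set C := P.part a with hC
  have hCmem : C ∈ P.parts := P.part_mem.2 haU
  have haC : a ∈ C := P.mem_part haU
  have hanot : ∀ d ∈ P.parts, a ∈ d → d = C := fun d hd had =>
    P.eq_of_mem_parts hd hCmem had haC
  have hS : a ∉ (P.parts.erase C).sup id := by
    intro hmem
    rw [mem_sup] at hmem
    obtain ⟨d, hd, hxd⟩ := hmem
    exact (mem_erase.1 hd).1 (hanot d (mem_of_mem_erase hd) hxd)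
  have hsup : C ∪ (P.parts.erase C).sup id = insert a t := by
    have h0 := P.sup_parts
    rw [← insert_erase hCmem, sup_insert] at h0
    simpa [sup_eq_union] using h0
  by_cases hCa : C = {a}
  · have hsupQ : (P.parts.erase C).sup id = t := by
      apply subset_antisymm
      · intro x hx
        have hxne : x ≠ a := fun hxa => hS (hxa ▸ hx)
        have hx2 : x ∈ insert a t := by
          rw [← hsup]; exact mem_union_right _ hx
        exact (mem_insert.1 hx2).resolve_left hxne
      · intro x hxt
        have hx2 : x ∈ C ∪ (P.parts.erase C).sup id := by
          rw [hsup]; exact mem_insert_of_mem hxt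
        rcases mem_union.1 hx2 with h | h
        · rw [hCa, mem_singleton] at h
          exact absurd (h ▸ hxt) ha
        · exact h
    refine ⟨⟨P.ofSubset (erase_subset _ _) hsupQ, none⟩, ?_⟩
    apply Finpartition.ext
    rw [ins_parts_none]
    show insert {a} (P.parts.erase C) = P.parts
    rw [← hCa, insert_erase hCmem]
  · set B := C.erase a with hBdef
    have haB : a ∉ B := notMem_erase _ _
    have hBC : insert a B = C := insert_erase haC
    have hBne : B.Nonempty := by
      by_contra h
      rw [not_nonempty_iff_eq_empty] at h
      apply hCa
      rw [← hBC, h]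
      rfl
    have hBsubC : B ⊆ C := erase_subset _ _
    have hBnotmem : B ∉ P.parts := by
      intro h
      obtain ⟨x, hx⟩ := hBne
      have : B = C := P.eq_of_mem_parts h hCmem hx (hBsubC hx)
      exact haB (this ▸ haC)
    have hSa : a ∉ (P.parts.erase C).sup id := hS
    let Q : Finpartition t :=
      { parts := insert B (P.parts.erase C)
        supIndep := by
          rw [supIndep_iff_pairwiseDisjoint, coe_insert]
          refine Set.PairwiseDisjoint.insert
            (P.disjoint.subset (coe_subset.2 (erase_subset _ _))) fun d hd hne => ?_
          rw [mem_coe, mem_erase] at hd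
          simp only [id]
          exact Disjoint.mono_left hBsubC (P.disjoint hCmem hd.2 (Ne.symm hd.1))
        sup_parts := by
          rw [sup_insert]
          simp only [id, sup_eq_union]
          calc C.erase a ∪ (P.parts.erase C).sup id
              = (C ∪ (P.parts.erase C).sup id).erase a := by
                rw [erase_union_distrib, erase_eq_of_notMem hSa]
            _ = t := by rw [hsup, erase_insert ha]
        bot_notMem := by
          simp only [bot_eq_empty, mem_insert, mem_erase, not_or]
          exact ⟨fun h => hBne.ne_empty h.symm, fun h => P.bot_notMem h.2⟩ }
    have hBQ : B ∈ Q.parts := mem_insert_self _ _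
    refine ⟨⟨Q, some ⟨B, hBQ⟩⟩, ?_⟩
    apply Finpartition.ext
    rw [ins_parts_some]
    show insert (insert a B) ((insert B (P.parts.erase C)).erase B) = P.parts
    have hBnotE : B ∉ P.parts.erase C := fun h => hBnotmem (mem_of_mem_erase h)
    rw [erase_insert hBnotE, hBC, insert_erase hCmem]

lemma ins_bijective (ha : a ∉ t) : Function.Bijective (ins ha) :=
  ⟨ins_injective ha, ins_surjective ha⟩

lemma w_addNew (α θ : ℝ) (ha : a ∉ t) (Q : Finpartition t) (ht : t.Nonempty) :
    w α θ (addNew ha Q) = w α θ Q * (θ + Q.parts.card * α) := by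
  have hk : 1 ≤ Q.parts.card := card_pos.2 (Q.parts_nonempty (by
    simpa using ht.ne_empty))
  have h1 : (addNew ha Q).parts.card - 1 = (Q.parts.card - 1) + 1 := by
    rw [addNew_parts_card]; omega
  rw [w, w, h1, risingFac_succ, addNew_parts,
    Finset.prod_insert (singleton_not_mem ha Q)]
  have : ((Q.parts.card - 1 : ℕ) : ℝ) = (Q.parts.card : ℝ) - 1 := by
    push_cast [hk]; ring
  simp only [card_singleton, Nat.sub_self, this]
  rw [show risingFac (1 - α) 1 0 = 1 from rfl]
  ring

lemma w_addTo (α θ : ℝ) (ha : a ∉ t) (Q : Finpartition t) (B : Finset ι) (hB : B ∈ Q.parts) :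
    w α θ (addTo ha Q B hB) = w α θ Q * (B.card - α) := by
  have hb : 1 ≤ B.card := card_pos.2 (Q.nonempty_of_mem_parts hB)
  have hcard : (insert a B).card = B.card + 1 :=
    card_insert_of_notMem (not_mem_of_part ha hB)
  have h1 : (insert a B).card - 1 = (B.card - 1) + 1 := by omega
  rw [w, w, addTo_parts_card, addTo_parts,
    Finset.prod_insert (insert_not_mem_erase ha Q B), h1, risingFac_succ,
    ← Finset.prod_erase_mul _ _ hB]
  have : ((B.card - 1 : ℕ) : ℝ) = (B.card : ℝ) - 1 := by push_cast [hb]; ring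
  rw [this]
  ring

end Stmt15Aux

open Finset Stmt15Aux in
lemma sum_w (α θ : ℝ) {ι : Type*} [DecidableEq ι] :
    ∀ (s : Finset ι), s.Nonempty →
      ∑ P : Finpartition s, w α θ P = risingFac (θ + 1) 1 (s.card - 1) := by
  intro s
  induction s using Finset.induction_on with
  | empty => rintro ⟨x, hx⟩; simp at hx
  | @insert a t ha ih =>
    intro _
    rcases t.eq_empty_or_nonempty with rfl | ht
    · -- singleton case
      have key : ∀ P : Finpartition (insert a (∅ : Finset ι)), P.parts = {{a}} := by
        intro P
        have hne : P.parts.Nonempty := P.parts_nonempty (by simp)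
        have hsub : P.parts ⊆ {({a} : Finset ι)} := by
          intro b hb
          have h1 : b ⊆ insert a ∅ := P.le hb
          have h2 : b.Nonempty := P.nonempty_of_mem_parts hb
          rw [mem_singleton]
          rcases (Finset.subset_singleton_iff.1 (by simpa using h1)) with h | h
          · exact absurd h h2.ne_empty
          · exact h
        rcases Finset.subset_singleton_iff.1 hsub with h | h
        · exact absurd h hne.ne_empty
        · exact h
      haveI : Subsingleton (Finpartition (insert a (∅ : Finset ι))) :=
        ⟨fun P Q => Finpartition.ext ((key P).trans (key Q).symm)⟩
      have hone : insert a (∅ : Finset ι) ≠ ∅ := by simp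
      rw [Fintype.sum_subsingleton _ (Finpartition.indiscrete hone)]
      rw [w, key (Finpartition.indiscrete hone)]
      simp [risingFac]
    · -- inductive step
      have hk : 1 ≤ t.card := card_pos.2 ht
      have hfiber : ∀ Q : Finpartition t,
          ∑ o : Option {B // B ∈ Q.parts}, w α θ (ins ha ⟨Q, o⟩)
            = w α θ Q * (θ + t.card) := by
        intro Q
        rw [Fintype.sum_option]
        have h1 : w α θ (ins ha ⟨Q, none⟩) = w α θ Q * (θ + Q.parts.card * α) :=
          w_addNew α θ ha Q ht
        have h2 : ∑ x : {B // B ∈ Q.parts}, w α θ (ins ha ⟨Q, some x⟩)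
            = ∑ B ∈ Q.parts, w α θ Q * ((B.card : ℝ) - α) := by
          rw [← Finset.sum_attach Q.parts (fun B => w α θ Q * ((B.card : ℝ) - α)),
            ← Finset.univ_eq_attach]
          exact Fintype.sum_congr _ _ fun x => w_addTo α θ ha Q x.1 x.2
        have hsum : ∑ B ∈ Q.parts, ((B.card : ℝ) - α)
            = (t.card : ℝ) - Q.parts.card * α := by
          rw [Finset.sum_sub_distrib, Finset.sum_const, nsmul_eq_mul,
            ← Nat.cast_sum, Q.sum_card_parts]
        rw [h1, h2, ← Finset.mul_sum, hsum]
        ring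
      calc ∑ P : Finpartition (insert a t), w α θ P
          = ∑ x : (Σ Q : Finpartition t, Option {B // B ∈ Q.parts}),
              w α θ (ins ha x) :=
            (Fintype.sum_bijective (ins ha) (ins_bijective ha) _ _ fun x => rfl).symm
        _ = ∑ Q : Finpartition t, ∑ o : Option {B // B ∈ Q.parts},
              w α θ (ins ha ⟨Q, o⟩) := by
            rw [← Finset.univ_sigma_univ, Finset.sum_sigma]
        _ = ∑ Q : Finpartition t, w α θ Q * (θ + t.card) := by
            exact Fintype.sum_congr _ _ hfiber
        _ = risingFac (θ + 1) 1 (t.card - 1) * (θ + t.card) := by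
            rw [← Finset.sum_mul, ih ht]
        _ = risingFac (θ + 1) 1 ((insert a t).card - 1) := by
            rw [card_insert_of_notMem ha, Nat.add_sub_cancel]
            obtain ⟨m, hm⟩ : ∃ m, t.card = m + 1 := ⟨t.card - 1, by omega⟩
            rw [hm, risingFac_succ, Nat.add_sub_cancel]
            push_cast
            ring

theorem stmt15 (α θ : ℝ) (hα : α ∈ Set.Ico (0 : ℝ) 1) (hθ : -α < θ)
    (n : ℕ) (hn : 1 ≤ n) :
    ∑ P : Finpartition (Finset.univ : Finset (Fin n)),
      (risingFac (θ + α) α (P.parts.card - 1)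
        * ∏ B ∈ P.parts, risingFac (1 - α) 1 (B.card - 1))
        / risingFac (θ + 1) 1 (n - 1) = 1 := by
  have hθ1 : (0:ℝ) < θ + 1 := by
    have : -1 < -α := by linarith [hα.2]
    linarith
  have hD : risingFac (θ + 1) 1 (n - 1) ≠ 0 := by
    refine ne_of_gt (Finset.prod_pos fun j _ => ?_)
    have : (0:ℝ) ≤ j := Nat.cast_nonneg j
    nlinarith
  haveI : NeZero n := ⟨by omega⟩
  have huniv : (Finset.univ : Finset (Fin n)).Nonempty := Finset.univ_nonempty
  have hcard : (Finset.univ : Finset (Fin n)).card = n := by simp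
  rw [← Finset.sum_div]
  rw [show ∑ P : Finpartition (Finset.univ : Finset (Fin n)),
      (risingFac (θ + α) α (P.parts.card - 1)
        * ∏ B ∈ P.parts, risingFac (1 - α) 1 (B.card - 1))
      = ∑ P : Finpartition (Finset.univ : Finset (Fin n)), Stmt15Aux.w α θ P from rfl]
  rw [sum_w α θ _ huniv, hcard, div_self hD]
end

section
/- Let W₁, W₂, … be independent random variables with Wₗ ~ Beta(1-α, θ+ℓα) for parameters α ∈ [0,1), θ > -α. Define the GEM(α,θ) sequence P̃₁ = W₁ and P̃ₗ = (1-W₁)⋯(1-W_{ℓ-1})Wₗ for ℓ ≥ 2. Then almost surely P̃ₗ ≥ 0 for all ℓ and Σₗ P̃ₗ = 1. -/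
open MeasureTheory ProbabilityTheory Filter Topology

/-- The Beta(a,b) distribution on `[0,1]`, with density
`x^(a-1) (1-x)^(b-1) / B(a,b)` where `B(a,b) = Γ(a)Γ(b)/Γ(a+b)`. -/
noncomputable def betaMeasure' (a b : ℝ) : Measure ℝ :=
  volume.withDensity (fun x => ENNReal.ofReal
    (if 0 < x ∧ x < 1 then
      x ^ (a - 1) * (1 - x) ^ (b - 1)
        / (Real.Gamma a * Real.Gamma b / Real.Gamma (a + b))
    else 0))


lemma betaDensity_measurable (a b : ℝ) : Measurable (fun x : ℝ => ENNReal.ofReal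
    (if 0 < x ∧ x < 1 then
      x ^ (a - 1) * (1 - x) ^ (b - 1)
        / (Real.Gamma a * Real.Gamma b / Real.Gamma (a + b))
    else 0)) := by
  apply Measurable.ennreal_ofReal
  apply Measurable.ite (by exact (measurableSet_Ioi.inter measurableSet_Iio : MeasurableSet {x : ℝ | 0 < x ∧ x < 1}))
  · fun_prop
  · exact measurable_const

lemma betaMeasure_compl_Ioo (a b : ℝ) : betaMeasure' a b (Set.Ioo 0 1)ᶜ = 0 := by
  rw [betaMeasure', withDensity_apply _ measurableSet_Ioo.compl]
  rw [setLIntegral_congr_fun measurableSet_Ioo.compl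
    (fun x hx => ?_), lintegral_zero]
  have : ¬ (0 < x ∧ x < 1) := fun h => hx ⟨h.1, h.2⟩
  simp [this]

lemma betaIntegrable_real (a b : ℝ) (ha : 0 < a) (hb : 0 < b) :
    IntegrableOn (fun x : ℝ => x ^ (a-1) * (1-x) ^ (b-1)) (Set.Ioo 0 1) volume := by
  have hc := Complex.betaIntegral_convergent (u := (a:ℂ)) (v := (b:ℂ))
    (by simpa using ha) (by simpa using hb)
  have h1 : IntegrableOn (fun x : ℝ => (x:ℂ) ^ ((a:ℂ)-1) * (1-(x:ℂ)) ^ ((b:ℂ)-1))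
      (Set.Ioo 0 1) volume := by
    exact hc.1.mono_set Set.Ioo_subset_Ioc_self
  have h3 : IntegrableOn (fun x : ℝ => ((x ^ (a-1) * (1-x) ^ (b-1) : ℝ) : ℂ))
      (Set.Ioo 0 1) volume := by
    refine h1.congr_fun (fun x hx => ?_) measurableSet_Ioo
    rw [Complex.ofReal_mul, Complex.ofReal_cpow hx.1.le,
      Complex.ofReal_cpow (by linarith [hx.2] : (0:ℝ) ≤ 1 - x)]
    push_cast; ring
  have h4 := h3.re
  simp at h4
  exact h4

lemma betaIntegral_real (a b : ℝ) (ha : 0 < a) (hb : 0 < b) :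
    ∫ x in Set.Ioo (0:ℝ) 1, x ^ (a-1) * (1-x) ^ (b-1)
      = Real.Gamma a * Real.Gamma b / Real.Gamma (a+b) := by
  have hcast : Complex.betaIntegral a b
      = ((∫ x in (0:ℝ)..1, x ^ (a-1) * (1-x) ^ (b-1) : ℝ) : ℂ) := by
    rw [Complex.betaIntegral, ← intervalIntegral.integral_ofReal]
    refine intervalIntegral.integral_congr fun x hx => ?_
    rw [Set.uIcc_of_le (by norm_num : (0:ℝ) ≤ 1)] at hx
    rw [Complex.ofReal_mul, Complex.ofReal_cpow hx.1, Complex.ofReal_cpow (by linarith [hx.2] : (0:ℝ) ≤ 1 - x)]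
    push_cast
    ring
  have hG := Complex.Gamma_mul_Gamma_eq_betaIntegral
    (s := (a:ℂ)) (t := (b:ℂ)) (by simpa using ha) (by simpa using hb)
  rw [hcast, ← Complex.ofReal_add, Complex.Gamma_ofReal, Complex.Gamma_ofReal,
    Complex.Gamma_ofReal, ← Complex.ofReal_mul, ← Complex.ofReal_mul] at hG
  have hG' := Complex.ofReal_inj.mp hG
  have hab : Real.Gamma (a+b) ≠ 0 := (Real.Gamma_pos_of_pos (by linarith)).ne'
  have : ∫ x in (0:ℝ)..1, x ^ (a-1) * (1-x) ^ (b-1)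
      = Real.Gamma a * Real.Gamma b / Real.Gamma (a+b) := by
    field_simp
    linarith [hG']
  rw [← this, intervalIntegral.integral_of_le (by norm_num : (0:ℝ) ≤ 1),
    MeasureTheory.integral_Ioc_eq_integral_Ioo]

lemma beta_lintegral_one_sub (a b : ℝ) (ha : 0 < a) (hb : 0 < b) :
    ∫⁻ x, ENNReal.ofReal (1 - x) ∂(betaMeasure' a b) = ENNReal.ofReal (b / (a + b)) := by
  set Z := Real.Gamma a * Real.Gamma b / Real.Gamma (a + b) with hZ
  have hZpos : 0 < Z := by
    apply div_pos (mul_pos (Real.Gamma_pos_of_pos ha) (Real.Gamma_pos_of_pos hb))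
      (Real.Gamma_pos_of_pos (by linarith))
  rw [betaMeasure', lintegral_withDensity_eq_lintegral_mul _ (betaDensity_measurable a b)
    (by fun_prop)]
  have hpt : ∀ x : ℝ, (fun x => ENNReal.ofReal
      (if 0 < x ∧ x < 1 then x ^ (a - 1) * (1 - x) ^ (b - 1) / Z else 0)) x
        * ENNReal.ofReal (1 - x)
      = Set.indicator (Set.Ioo 0 1)
          (fun x => ENNReal.ofReal (x ^ (a - 1) * (1 - x) ^ ((b+1) - 1) / Z)) x := by
    intro x
    dsimp only
    by_cases hx : x ∈ Set.Ioo (0:ℝ) 1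
    · rw [Set.indicator_of_mem hx]
      have h01 : 0 < x ∧ x < 1 := ⟨hx.1, hx.2⟩
      rw [if_pos h01, ← ENNReal.ofReal_mul (by
        have h1x : (0:ℝ) < 1 - x := by linarith [hx.2]
        have hx0 : (0:ℝ) < x := hx.1
        positivity)]
      congr 1
      have h1x : (0:ℝ) < 1 - x := by linarith [hx.2]
      rw [show (b+1) - 1 = (b-1) + 1 by ring, Real.rpow_add h1x, Real.rpow_one]
      ring
    · rw [Set.indicator_of_notMem hx, if_neg (fun h => hx ⟨h.1, h.2⟩)]
      simp
  simp only [Pi.mul_apply]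
  rw [lintegral_congr hpt]
  rw [lintegral_indicator measurableSet_Ioo _,
    ← ofReal_integral_eq_lintegral_ofReal
      (((betaIntegrable_real a (b+1) ha (by linarith)).div_const Z))
      (Filter.eventually_of_mem (ae_restrict_mem measurableSet_Ioo) (fun x hx => by
        have h1x : (0:ℝ) < 1 - x := by linarith [hx.2]
        have hx0 : (0:ℝ) < x := hx.1
        positivity))]
  rw [MeasureTheory.integral_div, betaIntegral_real a (b+1) ha (by linarith)]
  congr 1
  rw [show a + (b+1) = (a+b) + 1 by ring, Real.Gamma_add_one (by positivity : (0:ℝ) < b).ne']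
  rw [Real.Gamma_add_one (by positivity : a + b ≠ 0)]
  have g1 : Real.Gamma a ≠ 0 := (Real.Gamma_pos_of_pos ha).ne'
  have g2 : Real.Gamma b ≠ 0 := (Real.Gamma_pos_of_pos hb).ne'
  have g3 : Real.Gamma (a+b) ≠ 0 := (Real.Gamma_pos_of_pos (by linarith)).ne'
  have hab : a + b ≠ 0 := by positivity
  have g4 : Real.Gamma (b+a) ≠ 0 := by rwa [add_comm]
  rw [hZ]
  field_simp


lemma prod_ratio_tendsto_zero (α θ : ℝ) (hα : α ∈ Set.Ico (0 : ℝ) 1) (hθ : -α < θ) :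
    Tendsto (fun n => ∏ j ∈ Finset.range n,
      ((θ + ((j:ℝ)+1)*α) / ((1-α) + (θ + ((j:ℝ)+1)*α)))) atTop (𝓝 0) := by
  obtain ⟨hα0, hα1⟩ := hα
  have hθα : 0 < θ + α := by linarith
  have hb : ∀ j : ℕ, 0 < θ + ((j:ℝ)+1)*α := fun j => by
    have : (0:ℝ) ≤ j * α := by positivity
    nlinarith
  have hs : ∀ j : ℕ, 0 < (1-α) + (θ + ((j:ℝ)+1)*α) := fun j => by
    have := hb j; linarith
  set c : ℝ := (1-α) / (1+θ+α) with hc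
  have hcpos : 0 < c := div_pos (by linarith) (by linarith)
  -- bound each factor by exp(-(1-α)/s j)
  have hfac : ∀ j : ℕ, (θ + ((j:ℝ)+1)*α) / ((1-α) + (θ + ((j:ℝ)+1)*α))
      ≤ Real.exp (-(c / (j+1))) := by
    intro j
    have hsj := hs j
    have h1 : (θ + ((j:ℝ)+1)*α) / ((1-α) + (θ + ((j:ℝ)+1)*α))
        = 1 + (-((1-α) / ((1-α) + (θ + ((j:ℝ)+1)*α)))) := by
      have key : (θ + ((j:ℝ)+1)*α)/((1-α)+(θ+((j:ℝ)+1)*α)) + (1-α)/((1-α)+(θ+((j:ℝ)+1)*α)) = 1 := by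
        rw [← add_div, div_eq_one_iff_eq hsj.ne']; ring
      linarith
    have h2 : 1 + (-((1-α) / ((1-α) + (θ + ((j:ℝ)+1)*α))))
        ≤ Real.exp (-((1-α) / ((1-α) + (θ + ((j:ℝ)+1)*α)))) := by
      have := Real.add_one_le_exp (-((1-α) / ((1-α) + (θ + ((j:ℝ)+1)*α))))
      linarith
    have h3 : c / (j+1) ≤ (1-α) / ((1-α) + (θ + ((j:ℝ)+1)*α)) := by
      rw [hc, div_div]
      apply div_le_div_of_nonneg_left (by linarith) hsj
      have hj : (0:ℝ) ≤ (j:ℝ) := Nat.cast_nonneg j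
      nlinarith
    calc (θ + ((j:ℝ)+1)*α) / ((1-α) + (θ + ((j:ℝ)+1)*α))
        ≤ Real.exp (-((1-α) / ((1-α) + (θ + ((j:ℝ)+1)*α)))) := by rw [h1]; exact h2
      _ ≤ Real.exp (-(c / (j+1))) := Real.exp_le_exp.mpr (by linarith)
  have hnn : ∀ n, 0 ≤ ∏ j ∈ Finset.range n,
      ((θ + ((j:ℝ)+1)*α) / ((1-α) + (θ + ((j:ℝ)+1)*α))) := fun n =>
    Finset.prod_nonneg fun j _ => le_of_lt (div_pos (hb j) (hs j))
  have hub : ∀ n, ∏ j ∈ Finset.range n,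
      ((θ + ((j:ℝ)+1)*α) / ((1-α) + (θ + ((j:ℝ)+1)*α)))
      ≤ Real.exp (-(c * ∑ j ∈ Finset.range n, 1/((j:ℝ)+1))) := by
    intro n
    calc ∏ j ∈ Finset.range n, ((θ + ((j:ℝ)+1)*α) / ((1-α) + (θ + ((j:ℝ)+1)*α)))
        ≤ ∏ j ∈ Finset.range n, Real.exp (-(c / (j+1))) := by
          apply Finset.prod_le_prod (fun j _ => le_of_lt (div_pos (hb j) (hs j)))
            (fun j _ => hfac j)
      _ = Real.exp (∑ j ∈ Finset.range n, -(c / ((j:ℝ)+1))) := by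
          rw [Real.exp_sum]
      _ = Real.exp (-(c * ∑ j ∈ Finset.range n, 1/((j:ℝ)+1))) := by
          congr 1
          simp only [Finset.mul_sum, mul_one_div, ← Finset.sum_neg_distrib]
  -- RHS tends to 0
  have hsum : Tendsto (fun n => ∑ j ∈ Finset.range n, 1/((j:ℝ)+1)) atTop atTop :=
    Real.tendsto_sum_range_one_div_nat_succ_atTop
  have hrhs : Tendsto (fun n => Real.exp (-(c * ∑ j ∈ Finset.range n, 1/((j:ℝ)+1))))
      atTop (𝓝 0) := by
    apply Real.tendsto_exp_atBot.comp
    apply tendsto_neg_atTop_atBot.comp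
    exact hsum.const_mul_atTop hcpos
  exact squeeze_zero hnn hub hrhs

theorem stmt16 {Ω : Type*} [MeasurableSpace Ω] (μ : Measure Ω) [IsProbabilityMeasure μ]
    (α θ : ℝ) (hα : α ∈ Set.Ico (0 : ℝ) 1) (hθ : -α < θ)
    (W : ℕ → Ω → ℝ) (hWmeas : ∀ ℓ, Measurable (W ℓ))
    (hindep : iIndepFun W μ)
    -- `W ℓ ~ Beta(1-α, θ+(ℓ+1)α)` (here `W ℓ` denotes `W_{ℓ+1}` of the statement)
    (hbeta : ∀ ℓ : ℕ, Measure.map (W ℓ) μ = betaMeasure' (1 - α) (θ + (ℓ + 1) * α)) :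
    -- the GEM(α,θ) sequence `P̃ₗ = (1-W₁)⋯(1-W_{ℓ-1}) Wₗ` is a.s. nonnegative and sums to 1
    ∀ᵐ ω ∂μ,
      (∀ ℓ : ℕ, 0 ≤ (∏ j ∈ Finset.range ℓ, (1 - W j ω)) * W ℓ ω) ∧
      ∑' ℓ : ℕ, (∏ j ∈ Finset.range ℓ, (1 - W j ω)) * W ℓ ω = 1 := by
  obtain ⟨hα0, hα1⟩ := hα
  have hbpos : ∀ j : ℕ, 0 < θ + ((j:ℝ) + 1) * α := fun j => by
    have : (0:ℝ) ≤ (j:ℝ) * α := by positivity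
    nlinarith
  -- Step 1: a.s. each W j lies in (0,1)
  have hW01 : ∀ j : ℕ, ∀ᵐ ω ∂μ, W j ω ∈ Set.Ioo (0:ℝ) 1 := by
    intro j
    have hmap : μ ((W j) ⁻¹' (Set.Ioo (0:ℝ) 1)ᶜ) = 0 := by
      rw [← Measure.map_apply (hWmeas j) measurableSet_Ioo.compl, hbeta j,
        betaMeasure_compl_Ioo]
    rw [ae_iff]
    convert hmap using 2
    rfl
  have hW01all : ∀ᵐ ω ∂μ, ∀ j : ℕ, W j ω ∈ Set.Ioo (0:ℝ) 1 := ae_all_iff.mpr hW01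
  -- Step 2: the ENNReal-valued residual factors
  set F : ℕ → Ω → ENNReal := fun j ω => ENNReal.ofReal (1 - W j ω) with hF
  have hg : Measurable (fun x : ℝ => ENNReal.ofReal (1 - x)) := by fun_prop
  have hFmeas : ∀ j, Measurable (F j) := fun j => hg.comp (hWmeas j)
  have hFindep : iIndepFun F μ :=
    hindep.comp (fun _ x => ENNReal.ofReal (1 - x)) (fun _ => hg)
  have hFint : ∀ j : ℕ, ∫⁻ ω, F j ω ∂μ
      = ENNReal.ofReal ((θ + ((j:ℝ)+1)*α) / ((1-α) + (θ + ((j:ℝ)+1)*α))) := by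
    intro j
    rw [hF]
    rw [← lintegral_map hg (hWmeas j), hbeta j,
      beta_lintegral_one_sub (1-α) (θ + ((j:ℝ)+1)*α) (by linarith) (hbpos j)]
  -- Step 3: lintegral of the partial products
  have hprodint : ∀ n : ℕ, ∫⁻ ω, ∏ j ∈ Finset.range n, F j ω ∂μ
      = ∏ j ∈ Finset.range n,
          ENNReal.ofReal ((θ + ((j:ℝ)+1)*α) / ((1-α) + (θ + ((j:ℝ)+1)*α))) := by
    intro n
    induction n with
    | zero => simp
    | succ n ih =>
      have hind : IndepFun (∏ j ∈ Finset.range n, F j) (F n) μ :=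
        hFindep.indepFun_prod_range_succ hFmeas n
      have hpm : Measurable (∏ j ∈ Finset.range n, F j) := by
        rw [Finset.prod_fn]
        exact Finset.measurable_prod _ fun j _ => hFmeas j
      have := lintegral_mul_eq_lintegral_mul_lintegral_of_indepFun hpm (hFmeas n) hind
      simp only [Finset.prod_range_succ]
      calc ∫⁻ ω, (∏ j ∈ Finset.range n, F j ω) * F n ω ∂μ
          = ∫⁻ ω, ((∏ j ∈ Finset.range n, F j) * F n) ω ∂μ := by
            apply lintegral_congr; intro ω; simp [Finset.prod_apply]
        _ = (∫⁻ ω, (∏ j ∈ Finset.range n, F j) ω ∂μ) * ∫⁻ ω, F n ω ∂μ := this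
        _ = (∏ j ∈ Finset.range n,
              ENNReal.ofReal ((θ + ((j:ℝ)+1)*α) / ((1-α) + (θ + ((j:ℝ)+1)*α))))
            * ENNReal.ofReal ((θ + ((n:ℝ)+1)*α) / ((1-α) + (θ + ((n:ℝ)+1)*α))) := by
            rw [← ih, hFint n]
            congr 1
            apply lintegral_congr; intro ω; simp [Finset.prod_apply]
  -- Step 4: the infimum of partial products has zero integral
  set L : Ω → ENNReal := fun ω => ⨅ n, ∏ j ∈ Finset.range n, F j ω with hL
  have hLmeas : Measurable L :=
    Measurable.iInf (fun n => Finset.measurable_prod _ (fun j _ => hFmeas j))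
  have hrtend : Tendsto (fun n => ∏ j ∈ Finset.range n,
      ENNReal.ofReal ((θ + ((j:ℝ)+1)*α) / ((1-α) + (θ + ((j:ℝ)+1)*α)))) atTop (𝓝 0) := by
    have h1 : ∀ n, ∏ j ∈ Finset.range n,
        ENNReal.ofReal ((θ + ((j:ℝ)+1)*α) / ((1-α) + (θ + ((j:ℝ)+1)*α)))
        = ENNReal.ofReal (∏ j ∈ Finset.range n,
            ((θ + ((j:ℝ)+1)*α) / ((1-α) + (θ + ((j:ℝ)+1)*α)))) := by
      intro n
      rw [ENNReal.ofReal_prod_of_nonneg]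
      intro j _
      have := hbpos j
      have h2 : 0 < (1-α) + (θ + ((j:ℝ)+1)*α) := by linarith
      positivity
    simp only [h1]
    have := ENNReal.tendsto_ofReal (prod_ratio_tendsto_zero α θ ⟨hα0, hα1⟩ hθ)
    simpa using this
  have hLzero : ∫⁻ ω, L ω ∂μ = 0 := by
    have hle : ∀ n, ∫⁻ ω, L ω ∂μ ≤ ∏ j ∈ Finset.range n,
        ENNReal.ofReal ((θ + ((j:ℝ)+1)*α) / ((1-α) + (θ + ((j:ℝ)+1)*α))) := by
      intro n
      rw [← hprodint n]
      exact lintegral_mono fun ω => iInf_le _ n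
    have := ge_of_tendsto hrtend (Filter.Eventually.of_forall hle)
    simpa using this
  have hLae : ∀ᵐ ω ∂μ, L ω = 0 := (lintegral_eq_zero_iff hLmeas).mp hLzero
  -- Step 5: combine
  filter_upwards [hW01all, hLae] with ω h01 hL0
  have hprod_pos : ∀ n, (0:ℝ) ≤ ∏ j ∈ Finset.range n, (1 - W j ω) := fun n =>
    Finset.prod_nonneg fun j _ => by linarith [(h01 j).2]
  have hFeq : ∀ n, ∏ j ∈ Finset.range n, F j ω
      = ENNReal.ofReal (∏ j ∈ Finset.range n, (1 - W j ω)) := fun n => by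
    rw [ENNReal.ofReal_prod_of_nonneg (fun j _ => by linarith [(h01 j).2])]
  have hanti : Antitone (fun n => ∏ j ∈ Finset.range n, F j ω) := by
    apply antitone_nat_of_succ_le
    intro n
    rw [Finset.prod_range_succ]
    calc (∏ j ∈ Finset.range n, F j ω) * F n ω
        ≤ (∏ j ∈ Finset.range n, F j ω) * 1 := by
          apply mul_le_mul_right
          simp only [hF]
          rw [show (1:ENNReal) = ENNReal.ofReal 1 by simp]
          exact ENNReal.ofReal_le_ofReal (by linarith [(h01 n).1])
      _ = ∏ j ∈ Finset.range n, F j ω := mul_one _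
  have htendL : Tendsto (fun n => ∏ j ∈ Finset.range n, F j ω) atTop (𝓝 0) := by
    rw [← hL0]
    exact tendsto_atTop_iInf hanti
  have hPtend : Tendsto (fun n => ∏ j ∈ Finset.range n, (1 - W j ω)) atTop (𝓝 0) := by
    have h1 : ∀ n, ∏ j ∈ Finset.range n, (1 - W j ω)
        = (∏ j ∈ Finset.range n, F j ω).toReal := fun n => by
      rw [hFeq n, ENNReal.toReal_ofReal (hprod_pos n)]
    simp only [h1]
    have := (ENNReal.tendsto_toReal (by simp : (0:ENNReal) ≠ ⊤)).comp htendL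
    simpa only [Function.comp_def, ENNReal.toReal_zero] using this
  constructor
  · intro ℓ
    exact mul_nonneg (hprod_pos ℓ) (le_of_lt (h01 ℓ).1)
  · have hterm_nonneg : ∀ ℓ, 0 ≤ (∏ j ∈ Finset.range ℓ, (1 - W j ω)) * W ℓ ω := fun ℓ =>
      mul_nonneg (hprod_pos ℓ) (le_of_lt (h01 ℓ).1)
    have hpartial : ∀ n, ∑ ℓ ∈ Finset.range n,
        (∏ j ∈ Finset.range ℓ, (1 - W j ω)) * W ℓ ω
        = 1 - ∏ j ∈ Finset.range n, (1 - W j ω) := by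
      intro n
      induction n with
      | zero => simp
      | succ n ih =>
        rw [Finset.sum_range_succ, ih, Finset.prod_range_succ]
        ring
    apply HasSum.tsum_eq
    rw [hasSum_iff_tendsto_nat_of_nonneg hterm_nonneg]
    simp only [hpartial]
    have := tendsto_const_nhds (x := (1:ℝ)) (f := atTop (α := ℕ)) |>.sub hPtend
    simpa using this
end

section
/- Let μ be the measure on (0,∞)ⁿ defined as the image of ν ⊗ Law(Y₁,…,Yₙ) under (j, y) ↦ j·y, where ν is a Lévy measure on (0,∞) with ∫ min(1,x)dν < ∞ and Y₁,…,Yₙ are independent 1-Fréchet with scale parameters σ₁,…,σₙ. Then for every x = (x₁,…,xₙ) ∈ (0,∞)ⁿ, μ([0,x]ᶜ) = g_ν(Σₖ σₖ/xₖ), where g_ν(t) = ∫₀^∞ (1 - e^{-tx}) dν(x) and [0,x]ᶜ = {y ∈ [0,∞)ⁿ : yₖ > xₖ for some k}. -/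
open MeasureTheory
open scoped ENNReal

theorem stmt17 (n : ℕ)
    -- Lévy measure ν on (0,∞) with ∫ min(1,x) dν < ∞
    (ν : Measure ℝ) [SigmaFinite ν] (hν0 : ν {x | x ≤ 0} = 0)
    (hνint : ∫⁻ x, ENNReal.ofReal (min 1 x) ∂ν < ∞)
    -- the laws of the independent 1-Fréchet coordinates Y₁,…,Yₙ
    (σ : Fin n → ℝ) (hσ : ∀ k, 0 < σ k)
    (η : Fin n → Measure ℝ) (hηprob : ∀ k, IsProbabilityMeasure (η k))
    (hηcdf : ∀ k, ∀ x : ℝ, 0 < x →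
      η k (Set.Iic x) = ENNReal.ofReal (Real.exp (-σ k / x)))
    (hηcdf0 : ∀ k, ∀ x : ℝ, x ≤ 0 → η k (Set.Iic x) = 0)
    -- μ is the image of ν ⊗ Law(Y₁,…,Yₙ) under (j, y) ↦ j·y
    (μ : Measure (Fin n → ℝ))
    (hμ : μ = Measure.map (fun p : ℝ × (Fin n → ℝ) => fun k => p.1 * p.2 k)
      (ν.prod (Measure.pi η))) :
    ∀ x : Fin n → ℝ, (∀ k, 0 < x k) →
      μ {y : Fin n → ℝ | ∃ k, x k < y k}
        = ENNReal.ofReal (∫ v, (1 - Real.exp (-(∑ k, σ k / x k) * v)) ∂ν) := by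
  intro x hx
  set t : ℝ := ∑ k, σ k / x k with ht
  have ht0 : 0 ≤ t := Finset.sum_nonneg fun k _ => div_nonneg (hσ k).le (hx k).le
  haveI : ∀ k, IsProbabilityMeasure (η k) := hηprob
  have hfmeas : Measurable (fun p : ℝ × (Fin n → ℝ) => fun k => p.1 * p.2 k) :=
    measurable_pi_lambda _ fun k =>
      measurable_fst.mul ((measurable_pi_apply k).comp measurable_snd)
  have hSmeas : MeasurableSet {y : Fin n → ℝ | ∃ k, x k < y k} := by
    have h : {y : Fin n → ℝ | ∃ k, x k < y k} = ⋃ k, {y | x k < y k} := by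
      ext y; simp
    rw [h]
    exact MeasurableSet.iUnion fun k =>
      measurableSet_lt measurable_const (measurable_pi_apply k)
  have hae : ∀ᵐ j ∂ν, 0 < j := by
    rw [ae_iff]
    convert hν0 using 2
    ext j; simp [not_lt]
  -- pointwise computation for j > 0
  have hkey : ∀ j : ℝ, 0 < j →
      Measure.pi η {y : Fin n → ℝ | ∃ k, x k < j * y k}
        = ENNReal.ofReal (1 - Real.exp (-t * j)) := by
    intro j hj
    have hset : {y : Fin n → ℝ | ∃ k, x k < j * y k}
        = (Set.pi Set.univ fun k => Set.Iic (x k / j))ᶜ := by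
      ext y
      simp only [Set.mem_compl_iff, Set.mem_pi, Set.mem_univ, true_implies, Set.mem_Iic,
        Set.mem_setOf_eq, not_forall, not_le]
      constructor
      · rintro ⟨k, hk⟩
        exact ⟨k, (div_lt_iff₀ hj).mpr (by rwa [mul_comm] at hk)⟩
      · rintro ⟨k, hk⟩
        have := (div_lt_iff₀ hj).mp hk
        exact ⟨k, by rwa [mul_comm] at this⟩
    have hA : Measure.pi η (Set.pi Set.univ fun k => Set.Iic (x k / j))
        = ENNReal.ofReal (Real.exp (-t * j)) := by
      rw [Measure.pi_pi]
      have h1 : ∀ k, η k (Set.Iic (x k / j))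
          = ENNReal.ofReal (Real.exp (-(σ k / x k) * j)) := by
        intro k
        rw [hηcdf k _ (div_pos (hx k) hj)]
        congr 1
        field_simp
      simp_rw [h1]
      rw [← ENNReal.ofReal_prod_of_nonneg (fun k _ => (Real.exp_pos _).le)]
      congr 1
      rw [← Real.exp_sum]
      congr 1
      simp only [neg_mul, ht]
      rw [Finset.sum_mul, ← Finset.sum_neg_distrib]
    rw [hset, measure_compl (MeasurableSet.univ_pi fun k => measurableSet_Iic)
      (measure_ne_top _ _), hA, measure_univ,
      ← ENNReal.ofReal_one, ← ENNReal.ofReal_sub _ (Real.exp_pos _).le]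
  -- integrability of the integrand
  have hcont : Continuous (fun j : ℝ => 1 - Real.exp (-t * j)) := by
    continuity
  have hnonneg : ∀ j : ℝ, 0 < j → 0 ≤ 1 - Real.exp (-t * j) := by
    intro j hj
    have : Real.exp (-t * j) ≤ 1 := by
      rw [Real.exp_le_one_iff]
      nlinarith
    linarith
  have hbound : ∀ j : ℝ, 0 < j →
      1 - Real.exp (-t * j) ≤ max 1 t * min 1 j := by
    intro j hj
    have h1 : 1 - Real.exp (-t * j) ≤ 1 := by
      have := (Real.exp_pos (-t * j)).le; linarith
    have h2 : 1 - Real.exp (-t * j) ≤ t * j := by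
      have := Real.add_one_le_exp (-(t * j))
      have h' : -(t * j) = -t * j := by ring
      rw [h'] at this
      linarith
    rcases le_total j 1 with hj1 | hj1
    · have : min 1 j = j := min_eq_right hj1
      rw [this]
      calc 1 - Real.exp (-t * j) ≤ t * j := h2
        _ ≤ max 1 t * j := by
            apply mul_le_mul_of_nonneg_right (le_max_right 1 t) hj.le
    · have : min 1 j = 1 := min_eq_left hj1
      rw [this, mul_one]
      exact h1.trans (le_max_left 1 t)
  have hnn_ae : 0 ≤ᵐ[ν] fun j => 1 - Real.exp (-t * j) :=
    hae.mono fun j hj => hnonneg j hj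
  have hint : Integrable (fun j : ℝ => 1 - Real.exp (-t * j)) ν := by
    refine ⟨hcont.aestronglyMeasurable, ?_⟩
    rw [hasFiniteIntegral_iff_ofReal hnn_ae]
    have hle : ∫⁻ j, ENNReal.ofReal (1 - Real.exp (-t * j)) ∂ν
        ≤ ∫⁻ j, ENNReal.ofReal (max 1 t) * ENNReal.ofReal (min 1 j) ∂ν := by
      refine lintegral_mono_ae (hae.mono fun j hj => ?_)
      rw [← ENNReal.ofReal_mul (by positivity)]
      exact ENNReal.ofReal_le_ofReal (hbound j hj)
    refine lt_of_le_of_lt hle ?_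
    rw [lintegral_const_mul' _ _ ENNReal.ofReal_ne_top]
    exact ENNReal.mul_lt_top ENNReal.ofReal_lt_top hνint
  -- main computation
  rw [hμ, Measure.map_apply hfmeas hSmeas, Measure.prod_apply (hfmeas hSmeas)]
  rw [MeasureTheory.ofReal_integral_eq_lintegral_ofReal hint hnn_ae]
  refine lintegral_congr_ae (hae.mono fun j hj => ?_)
  exact hkey j hj
end

section
/- The function F: (0,∞)ⁿ → [0,1] defined by F(x₁,…,xₙ) = L(Σₖ σₖ/xₖ), where L is the Laplace transform of a nonnegative random variable J with P(J > 0) > 0 and σₖ > 0, is a valid multivariate distribution function: it equals the joint CDF of the random vector (J Y₁, …, J Yₙ) for Y₁,…,Yₙ independent 1-Fréchet(σₖ) independent of J. In particular F is non-decreasing in each coordinate and F(x) → 1 as all xₖ → ∞. -/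
open MeasureTheory ProbabilityTheory Filter

section aux
variable {Ω : Type*} [MeasurableSpace Ω] (μ : Measure Ω) [IsProbabilityMeasure μ]

lemma aux_integrable {J : Ω → ℝ} (hJmeas : Measurable J) (hJnn : ∀ ω, 0 ≤ J ω)
    {t : ℝ} (ht : 0 ≤ t) : Integrable (fun ω => Real.exp (-t * J ω)) μ := by
  refine (integrable_const (1:ℝ)).mono' ((hJmeas.const_mul (-t)).exp.aestronglyMeasurable) ?_
  filter_upwards with ω
  rw [Real.norm_eq_abs, abs_of_pos (Real.exp_pos _)]
  exact Real.exp_le_one_iff.2 (by nlinarith [hJnn ω])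

lemma aux_mono {J : Ω → ℝ} (hJmeas : Measurable J) (hJnn : ∀ ω, 0 ≤ J ω)
    {t₁ t₂ : ℝ} (h1 : 0 ≤ t₁) (h12 : t₁ ≤ t₂) :
    ∫ ω, Real.exp (-t₂ * J ω) ∂μ ≤ ∫ ω, Real.exp (-t₁ * J ω) ∂μ := by
  refine integral_mono (aux_integrable μ hJmeas hJnn (h1.trans h12)) (aux_integrable μ hJmeas hJnn h1) ?_
  intro ω
  exact Real.exp_le_exp.2 (by nlinarith [hJnn ω])

lemma aux_tendsto {J : Ω → ℝ} (hJmeas : Measurable J) (hJnn : ∀ ω, 0 ≤ J ω) :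
    Tendsto (fun t => ∫ ω, Real.exp (-t * J ω) ∂μ) (nhdsWithin 0 (Set.Ici 0)) (nhds 1) := by
  have h1 : (1:ℝ) = ∫ _ω, (1:ℝ) ∂μ := by simp
  rw [h1]
  refine tendsto_integral_filter_of_dominated_convergence (fun _ => (1:ℝ)) ?_ ?_ (integrable_const 1) ?_
  · filter_upwards with t
    exact ((hJmeas.const_mul (-t)).exp).aestronglyMeasurable
  · filter_upwards [self_mem_nhdsWithin] with t (ht : 0 ≤ t)
    filter_upwards with ω
    rw [Real.norm_eq_abs, abs_of_pos (Real.exp_pos _)]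
    exact Real.exp_le_one_iff.2 (by nlinarith [hJnn ω])
  · filter_upwards with ω
    have : Tendsto (fun t : ℝ => Real.exp (-t * J ω)) (nhds 0) (nhds 1) := by
      have hc : Continuous (fun t : ℝ => Real.exp (-t * J ω)) :=
        Real.continuous_exp.comp ((continuous_id.neg).mul continuous_const)
      simpa using hc.tendsto 0
    exact this.mono_left nhdsWithin_le_nhds

end aux

theorem stmt18 {Ω : Type*} [MeasurableSpace Ω] (μ : Measure Ω) [IsProbabilityMeasure μ]
    (n : ℕ) (J : Ω → ℝ) (hJmeas : Measurable J) (hJnn : ∀ ω, 0 ≤ J ω)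
    (hJpos : 0 < μ {ω | 0 < J ω})
    (L : ℝ → ℝ) (hL : ∀ t : ℝ, L t = ∫ ω, Real.exp (-t * J ω) ∂μ)
    (σ : Fin n → ℝ) (hσ : ∀ k, 0 < σ k)
    (Y : Fin n → Ω → ℝ) (hYmeas : ∀ k, Measurable (Y k))
    (hY : ∀ k, IsFrechet μ (Y k) (σ k))
    (hindep : iIndepFun
      (fun i : Option (Fin n) => i.elim J Y) μ) :
    -- `F(x) = L(∑ₖ σₖ/xₖ)` is the joint CDF of `(J Y₁, …, J Yₙ)`,
    (∀ x : Fin n → ℝ, (∀ k, 0 < x k) →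
      μ {ω | ∀ k, J ω * Y k ω ≤ x k} = ENNReal.ofReal (L (∑ k, σ k / x k))) ∧
    -- it is non-decreasing in each coordinate on the positive orthant,
    (∀ x y : Fin n → ℝ, (∀ k, 0 < x k) → x ≤ y →
      L (∑ k, σ k / x k) ≤ L (∑ k, σ k / y k)) ∧
    -- and `F(x) → 1` as all coordinates `xₖ → ∞`
    Tendsto (fun x : Fin n → ℝ => L (∑ k, σ k / x k)) atTop (nhds 1) := by
  refine ⟨?_, ?_, ?_⟩
  · intro x hx
    set s := ∑ k, σ k / x k with hs_def
    have hs0 : 0 ≤ s := Finset.sum_nonneg fun k _ => div_nonneg (hσ k).le (hx k).le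
    set Yv : Ω → (Fin n → ℝ) := fun ω k => Y k ω with hYv_def
    have hYv : Measurable Yv := measurable_pi_lambda _ fun k => hYmeas k
    have hmeas : ∀ i : Option (Fin n), Measurable (i.elim J Y) := by
      rintro (_|k)
      exacts [hJmeas, hYmeas k]
    have hIndep : IndepFun J Yv μ := by
      have hd : Disjoint ({none} : Finset (Option (Fin n))) (Finset.univ.image some) := by
        simp [Finset.disjoint_left]
      have h := hindep.indepFun_finset {none} (Finset.univ.image some) hd hmeas
      exact h.comp
        (φ := fun p : (({none} : Finset (Option (Fin n))) → ℝ) =>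
          p ⟨none, Finset.mem_singleton_self none⟩)
        (ψ := fun p : ((Finset.univ.image (some : Fin n → Option (Fin n))) → ℝ) =>
          fun k => p ⟨some k, by simp⟩)
        (measurable_pi_apply _) (measurable_pi_lambda _ fun k => measurable_pi_apply _)
    set S : Set (ℝ × (Fin n → ℝ)) := {p | ∀ k, p.1 * p.2 k ≤ x k} with hS_def
    have hSmeas : MeasurableSet S := by
      have hS2 : S = ⋂ k, {p : ℝ × (Fin n → ℝ) | p.1 * p.2 k ≤ x k} := by
        ext p; simp [hS_def]
      rw [hS2]
      exact MeasurableSet.iInter fun k =>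
        measurableSet_le (measurable_fst.mul ((measurable_pi_apply k).comp measurable_snd))
          measurable_const
    have hmap : μ.map (fun ω => (J ω, Yv ω)) = (μ.map J).prod (μ.map Yv) :=
      (indepFun_iff_map_prod_eq_prod_map_map hJmeas.aemeasurable hYv.aemeasurable).1 hIndep
    have hev : {ω | ∀ k, J ω * Y k ω ≤ x k} = (fun ω => (J ω, Yv ω)) ⁻¹' S := rfl
    rw [hev, ← Measure.map_apply (hJmeas.prodMk hYv) hSmeas, hmap, Measure.prod_apply hSmeas]
    have key : ∀ j : ℝ, 0 ≤ j → μ.map Yv (Prod.mk j ⁻¹' S) = ENNReal.ofReal (Real.exp (-s * j)) := by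
      intro j hj
      rcases hj.eq_or_lt with hj0 | hjpos
      · have huniv : Prod.mk j ⁻¹' S = Set.univ := by
          ext v
          simp only [Set.mem_preimage, hS_def, Set.mem_setOf_eq, Set.mem_univ, iff_true, ← hj0]
          intro k
          simpa using (hx k).le
        rw [huniv, Measure.map_apply hYv MeasurableSet.univ]
        simp [← hj0]
      · have hset : Yv ⁻¹' (Prod.mk j ⁻¹' S) = ⋂ k, Y k ⁻¹' Set.Iic (x k / j) := by
          ext ω
          simp only [Set.mem_preimage, Set.mem_iInter, Set.mem_Iic, hS_def, Set.mem_setOf_eq,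
            hYv_def]
          exact forall_congr' fun k => by rw [le_div_iff₀ hjpos, mul_comm]
        have hinter : (⋂ k, Y k ⁻¹' Set.Iic (x k / j)) =
            ⋂ i ∈ Finset.univ.image (some : Fin n → Option (Fin n)),
              (Option.elim i J Y) ⁻¹' (Option.elim i Set.univ (fun k => Set.Iic (x k / j))) := by
          ext ω
          simp
        have hprod := hindep.measure_inter_preimage_eq_mul (Finset.univ.image some)
          (sets := fun i => Option.elim i Set.univ (fun k => Set.Iic (x k / j)))
          (fun i _ => by
            rcases i with _ | k
            exacts [MeasurableSet.univ, measurableSet_Iic])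
        have hfac : ∀ k : Fin n, μ ((Option.elim (some k) J Y) ⁻¹'
              (Option.elim (some k) Set.univ (fun k => Set.Iic (x k / j))))
            = ENNReal.ofReal (Real.exp (-(σ k / x k * j))) := by
          intro k
          have hfr := (hY k).1 (x k / j) (div_pos (hx k) hjpos)
          have hpre : (Option.elim (some k) J Y) ⁻¹'
              (Option.elim (some k) Set.univ (fun k => Set.Iic (x k / j)))
              = {ω | Y k ω ≤ x k / j} := rfl
          rw [hpre, hfr]
          congr 1
          rw [neg_div]
          congr 1
          field_simp
        rw [Measure.map_apply hYv (hSmeas.preimage measurable_prodMk_left), hset, hinter, hprod,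
          Finset.prod_image (fun a _ b _ h => Option.some_injective _ h)]
        rw [Finset.prod_congr rfl (fun k _ => hfac k),
          ← ENNReal.ofReal_prod_of_nonneg (fun k _ => (Real.exp_pos _).le), ← Real.exp_sum]
        congr 1
        rw [hs_def, neg_mul, Finset.sum_mul, ← Finset.sum_neg_distrib]
    have hae : ∀ᵐ j ∂(μ.map J), 0 ≤ j := by
      rw [MeasureTheory.ae_map_iff hJmeas.aemeasurable measurableSet_Ici]
      exact Filter.Eventually.of_forall hJnn
    have hm : Measurable (fun a : ℝ => ENNReal.ofReal (Real.exp (-s * a))) := by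
      fun_prop
    rw [lintegral_congr_ae (hae.mono fun j hj => key j hj),
      lintegral_map hm hJmeas,
      ← ofReal_integral_eq_lintegral_ofReal (aux_integrable μ hJmeas hJnn hs0)
        (Filter.Eventually.of_forall fun ω => (Real.exp_pos _).le), hL]
  · intro x y hx hxy
    have hy : ∀ k, 0 < y k := fun k => lt_of_lt_of_le (hx k) (hxy k)
    have hsum : ∑ k, σ k / y k ≤ ∑ k, σ k / x k :=
      Finset.sum_le_sum fun k _ => div_le_div_of_nonneg_left (hσ k).le (hx k) (hxy k)
    have hnn : 0 ≤ ∑ k, σ k / y k :=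
      Finset.sum_nonneg fun k _ => div_nonneg (hσ k).le (hy k).le
    rw [hL, hL]
    exact aux_mono μ hJmeas hJnn hnn hsum
  · have h1 : Tendsto (fun x : Fin n → ℝ => ∑ k, σ k / x k) atTop (nhdsWithin 0 (Set.Ici 0)) := by
      rw [tendsto_nhdsWithin_iff]
      constructor
      · have : Tendsto (fun x : Fin n → ℝ => ∑ k, σ k / x k) atTop (nhds (∑ k : Fin n, (0:ℝ))) := by
          refine tendsto_finset_sum _ fun k _ => ?_
          refine Tendsto.div_atTop (tendsto_const_nhds) ?_
          exact tendsto_atTop_atTop.2 fun b => ⟨fun _ => b, fun x hx => hx k⟩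
        simpa using this
      · filter_upwards [eventually_ge_atTop (fun _ => (1:ℝ))] with x hx
        exact Finset.sum_nonneg fun k _ =>
          div_nonneg (hσ k).le (le_trans zero_le_one (hx k))
    have h2 : Tendsto L (nhdsWithin 0 (Set.Ici 0)) (nhds 1) := by
      have := aux_tendsto μ hJmeas hJnn
      refine Tendsto.congr (fun t => (hL t).symm) this
    exact h2.comp h1
end
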